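/- There exists a continuous bijection from Baire space onto the nonnegative reals: there is a function F : (ℕ → ℕ) → ℝ that is continuous with respect to the product topology on ℕ → ℕ (where ℕ carries the discrete topology), is injective, and whose range is exactly {x : ℝ | x ≥ 0}. -/

import Mathlib

noncomputable section BaireCF

open Filter Topology

namespace BaireCF

/-- The basic contraction `t ↦ t/(1+|t|)`, equal to `t/(1+t)` on nonnegatives. -/
def phi (t : ℝ) : ℝ := t / (1 + |t|)

lemma phi_eq {t : ℝ} (ht : 0 ≤ t) : phi t = t / (1 + t) := by
  rw [phi, abs_of_nonneg ht]

lemma phi_zero : phi 0 = 0 := by simp [phi]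

lemma phi_nonneg {t : ℝ} (ht : 0 ≤ t) : 0 ≤ phi t := by
  rw [phi_eq ht]; positivity

lemma phi_lt_one {t : ℝ} (ht : 0 ≤ t) : phi t < 1 := by
  rw [phi_eq ht, div_lt_one (by linarith)]; linarith

lemma phi_sub {s t : ℝ} (hs : 0 ≤ s) (ht : 0 ≤ t) :
    phi t - phi s = (t - s) / ((1 + t) * (1 + s)) := by
  rw [phi_eq hs, phi_eq ht]
  field_simp
  ring

lemma phi_mono {s t : ℝ} (hs : 0 ≤ s) (hst : s ≤ t) : phi s ≤ phi t := by
  have h := phi_sub hs (hs.trans hst)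
  have : 0 ≤ (t - s) / ((1 + t) * (1 + s)) := by
    apply div_nonneg (by linarith)
    have : 0 ≤ t := hs.trans hst
    positivity
  linarith

lemma phi_injOn {s t : ℝ} (hs : 0 ≤ s) (ht : 0 ≤ t) (h : phi s = phi t) : s = t := by
  rcases le_total s t with hst | hst
  · have h2 := phi_sub hs ht
    rw [h, sub_self] at h2
    have hpos : 0 < (1 + t) * (1 + s) := by positivity
    have : t - s = 0 := by
      field_simp at h2
      linarith
    linarith
  · have h2 := phi_sub ht hs
    rw [h, sub_self] at h2
    have hpos : 0 < (1 + s) * (1 + t) := by positivity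
    have : s - t = 0 := by
      field_simp at h2
      linarith
    linarith

lemma phi_continuous : Continuous phi := by
  apply continuous_id.div (continuous_const.add continuous_abs)
  intro t
  have : 0 < 1 + |t| := by positivity
  exact ne_of_gt this

/-- Finite continued-fraction-like fold: `fold n a t = a₀ + φ(a₁ + φ(⋯ aₙ + φ t ⋯))`. -/
def fold : ℕ → (ℕ → ℕ) → ℝ → ℝ
  | 0, a, t => (a 0 : ℝ) + phi t
  | n + 1, a, t => (a 0 : ℝ) + phi (fold n (fun k => a (k + 1)) t)

lemma fold_nonneg : ∀ (n : ℕ) (a : ℕ → ℕ) {t : ℝ}, 0 ≤ t → 0 ≤ fold n a t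
  | 0, a, t, ht => by
    have := phi_nonneg ht
    simp only [fold]
    positivity
  | n + 1, a, t, ht => by
    have h := fold_nonneg n (fun k => a (k + 1)) ht
    have := phi_nonneg h
    simp only [fold]
    positivity

lemma fold_lt (n : ℕ) (a : ℕ → ℕ) {t : ℝ} (ht : 0 ≤ t) : fold n a t < (a 0 : ℝ) + 1 := by
  cases n with
  | zero =>
    have := phi_lt_one ht
    simp only [fold]; linarith
  | succ n =>
    have h := fold_nonneg n (fun k => a (k + 1)) ht
    have := phi_lt_one h
    simp only [fold]; linarith

lemma fold_mono : ∀ (n : ℕ) (a : ℕ → ℕ) {s t : ℝ}, 0 ≤ s → s ≤ t →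
    fold n a s ≤ fold n a t
  | 0, a, s, t, hs, hst => by
    have := phi_mono hs hst
    simp only [fold]; linarith
  | n + 1, a, s, t, hs, hst => by
    have h := fold_mono n (fun k => a (k + 1)) hs hst
    have h0 := fold_nonneg n (fun k => a (k + 1)) hs
    have := phi_mono h0 h
    simp only [fold]; linarith

lemma fold_diff : ∀ (n : ℕ) (a : ℕ → ℕ) {s t : ℝ}, 0 ≤ s → s ≤ t →
    fold n a t - fold n a s ≤ 1 / (n + 1)
  | 0, a, s, t, hs, hst => by
    have ht : 0 ≤ t := hs.trans hst
    have h := phi_sub hs ht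
    simp only [fold, Nat.cast_zero]
    have hle : (t - s) / ((1 + t) * (1 + s)) ≤ 1 := by
      rw [div_le_one (by positivity)]
      nlinarith
    rw [add_sub_add_left_eq_sub, h]
    norm_num
    linarith
  | n + 1, a, s, t, hs, hst => by
    set S := fold n (fun k => a (k + 1)) s with hS
    set T := fold n (fun k => a (k + 1)) t with hT
    have hS0 : 0 ≤ S := fold_nonneg n _ hs
    have hST : S ≤ T := fold_mono n _ hs hst
    have hd : T - S ≤ 1 / (n + 1) := fold_diff n _ hs hst
    have hT0 : 0 ≤ T := hS0.trans hST
    have hsub := phi_sub hS0 hT0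
    simp only [fold, ← hS, ← hT, add_sub_add_left_eq_sub]
    rw [hsub]
    set d := T - S with hdd
    have hd0 : 0 ≤ d := by simp [hdd]; linarith
    -- (1+T)(1+S) ≥ 1 + d
    have hden : 1 + d ≤ (1 + T) * (1 + S) := by nlinarith
    have step1 : d / ((1 + T) * (1 + S)) ≤ d / (1 + d) :=
      div_le_div_of_nonneg_left hd0 (by positivity) hden
    have step2 : d / (1 + d) ≤ (1 / (n + 1)) / (1 + 1 / (n + 1)) := by
      rw [div_le_div_iff₀ (by positivity) (by positivity)]
      have hn : (0:ℝ) < (n:ℝ) + 1 := by positivity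
      nlinarith [mul_pos hn hn]
    have step3 : (1 / ((n:ℝ) + 1)) / (1 + 1 / (n + 1)) = 1 / ((n:ℝ) + 1 + 1) := by
      have hn : (0:ℝ) < (n:ℝ) + 1 := by positivity
      field_simp
    calc d / ((1 + T) * (1 + S)) ≤ d / (1 + d) := step1
      _ ≤ (1 / ((n:ℝ) + 1)) / (1 + 1 / (n + 1)) := step2
      _ = 1 / ((n:ℝ) + 1 + 1) := step3
      _ = 1 / (((n + 1 : ℕ) : ℝ) + 1) := by push_cast; ring

lemma fold_comp : ∀ (n : ℕ) (a : ℕ → ℕ) (t : ℝ),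
    fold (n + 1) a t = fold n a ((a (n + 1) : ℝ) + phi t)
  | 0, a, t => by simp only [fold]
  | n + 1, a, t => by
    rw [show fold (n + 1 + 1) a t
          = (a 0 : ℝ) + phi (fold (n + 1) (fun k => a (k + 1)) t) from rfl,
        fold_comp n (fun k => a (k + 1)) t,
        show fold (n + 1) a ((a (n + 1 + 1) : ℝ) + phi t)
          = (a 0 : ℝ) + phi (fold n (fun k => a (k + 1)) ((a (n + 1 + 1) : ℝ) + phi t))
          from rfl]

lemma fold_shift_exists : ∀ (k n : ℕ) (a : ℕ → ℕ) {t : ℝ}, 0 ≤ t →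
    ∃ c : ℝ, 0 ≤ c ∧ fold (n + k) a t = fold n a c
  | 0, n, a, t, ht => ⟨t, ht, rfl⟩
  | k + 1, n, a, t, ht => by
    have h := fold_comp (n + k) a t
    obtain ⟨c, hc0, hc⟩ := fold_shift_exists k n a
      (t := (a (n + k + 1) : ℝ) + phi t)
      (by have := phi_nonneg ht; positivity)
    exact ⟨c, hc0, by rw [show n + (k+1) = n + k + 1 from rfl, h, hc]⟩

/-- Truncated value. -/
def val (n : ℕ) (a : ℕ → ℕ) : ℝ := fold n a 0

lemma val_mono (a : ℕ → ℕ) : Monotone fun n => val n a := by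
  apply monotone_nat_of_le_succ
  intro n
  show fold n a 0 ≤ fold (n + 1) a 0
  rw [fold_comp n a 0, phi_zero, add_zero]
  exact fold_mono n a le_rfl (by positivity)

lemma val_le_val_add (n m : ℕ) (a : ℕ → ℕ) (h : n ≤ m) :
    val m a ≤ val n a + 1 / (n + 1) := by
  obtain ⟨k, rfl⟩ := Nat.exists_eq_add_of_le h
  obtain ⟨c, hc0, hc⟩ := fold_shift_exists k n a (le_refl (0:ℝ))
  have hd := fold_diff n a (s := 0) (t := c) le_rfl hc0
  show fold (n + k) a 0 ≤ fold n a 0 + 1 / (n + 1)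
  rw [hc]
  linarith [hd]

lemma val_lt (n : ℕ) (a : ℕ → ℕ) : val n a < (a 0 : ℝ) + 1 :=
  fold_lt n a le_rfl

lemma val_bdd (a : ℕ → ℕ) : BddAbove (Set.range fun n => val n a) := by
  refine ⟨(a 0 : ℝ) + 1, ?_⟩
  rintro x ⟨n, rfl⟩
  exact (val_lt n a).le

/-- The continued fraction map from Baire space to `[0,∞)`. -/
def F (a : ℕ → ℕ) : ℝ := ⨆ n, val n a

lemma tendsto_val (a : ℕ → ℕ) : Tendsto (fun n => val n a) atTop (𝓝 (F a)) :=
  tendsto_atTop_ciSup (val_mono a) (val_bdd a)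

lemma val_le_F (n : ℕ) (a : ℕ → ℕ) : val n a ≤ F a :=
  le_ciSup (val_bdd a) n

lemma F_le_val_add (n : ℕ) (a : ℕ → ℕ) : F a ≤ val n a + 1 / (n + 1) := by
  apply ciSup_le
  intro m
  rcases le_total m n with h | h
  · have := val_mono a h
    have h1 : (0:ℝ) < 1 / (n + 1) := by positivity
    simp only at this
    linarith
  · exact val_le_val_add n m a h

lemma val_continuous : ∀ n : ℕ, Continuous fun a : ℕ → ℕ => fold n a 0
  | 0 => by
    simp only [fold]
    exact ((continuous_of_discreteTopology (f := fun m : ℕ => (m : ℝ))).comp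
      (continuous_apply 0)).add continuous_const
  | n + 1 => by
    simp only [fold]
    have hshift : Continuous fun a : ℕ → ℕ => (fun k => a (k + 1)) :=
      continuous_pi fun i => continuous_apply (i + 1)
    exact ((continuous_of_discreteTopology (f := fun m : ℕ => (m : ℝ))).comp
      (continuous_apply 0)).add
      (phi_continuous.comp ((val_continuous n).comp hshift))

lemma F_continuous : Continuous F := by
  have huni : TendstoUniformly (fun n a => val n a) F atTop := by
    rw [Metric.tendstoUniformly_iff]
    intro ε hε
    obtain ⟨N, hN⟩ := exists_nat_gt (1 / ε)
    filter_upwards [eventually_ge_atTop N] with n hn a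
    have h1 : val n a ≤ F a := val_le_F n a
    have h2 : F a ≤ val n a + 1 / (n + 1) := F_le_val_add n a
    rw [Real.dist_eq, abs_of_nonneg (by linarith)]
    have hNn : (N : ℝ) ≤ n := Nat.cast_le.mpr hn
    have hN' : 1 / ε < (N : ℝ) := hN
    have hε' : (0:ℝ) < ε := hε
    have hNpos : (0:ℝ) < N := lt_trans (by positivity) hN'
    have : 1 / ((n:ℝ) + 1) < ε := by
      rw [div_lt_iff₀ (by positivity)]
      rw [div_lt_iff₀ hε'] at hN'
      nlinarith
    linarith
  exact huni.continuous (Eventually.of_forall (f := atTop) val_continuous).frequently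

lemma F_rec (a : ℕ → ℕ) : F a = (a 0 : ℝ) + phi (F fun k => a (k + 1)) := by
  have h1 : Tendsto (fun n => val (n + 1) a) atTop (𝓝 (F a)) :=
    (tendsto_val a).comp (tendsto_add_atTop_nat 1)
  have h2 : (fun n => val (n + 1) a)
      = fun n => (a 0 : ℝ) + phi (val n fun k => a (k + 1)) := rfl
  have h3 : Tendsto (fun n => (a 0 : ℝ) + phi (val n fun k => a (k + 1))) atTop
      (𝓝 ((a 0 : ℝ) + phi (F fun k => a (k + 1)))) := by
    exact tendsto_const_nhds.add
      ((phi_continuous.tendsto _).comp (tendsto_val _))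
  rw [h2] at h1
  exact tendsto_nhds_unique h1 h3

lemma F_nonneg (a : ℕ → ℕ) : 0 ≤ F a := by
  have := val_le_F 0 a
  have h0 : (0:ℝ) ≤ val 0 a := by
    show (0:ℝ) ≤ fold 0 a 0
    exact fold_nonneg 0 a le_rfl
  linarith

lemma F_floor (a : ℕ → ℕ) : ⌊F a⌋₊ = a 0 := by
  have hrec := F_rec a
  have hsn : 0 ≤ F fun k => a (k + 1) := F_nonneg _
  have h1 : 0 ≤ phi (F fun k => a (k + 1)) := phi_nonneg hsn
  have h2 : phi (F fun k => a (k + 1)) < 1 := phi_lt_one hsn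
  rw [Nat.floor_eq_iff (F_nonneg a)]
  constructor <;> [linarith; linarith]

lemma F_injective : Function.Injective F := by
  have key : ∀ (k : ℕ) (a b : ℕ → ℕ), F a = F b → a k = b k := by
    intro k
    induction k with
    | zero =>
      intro a b h
      rw [← F_floor a, ← F_floor b, h]
    | succ k ih =>
      intro a b h
      have h0 : a 0 = b 0 := by rw [← F_floor a, ← F_floor b, h]
      have hra := F_rec a
      have hrb := F_rec b
      have hphi : phi (F fun j => a (j + 1)) = phi (F fun j => b (j + 1)) := by
        rw [hra, hrb, h0] at h
        linarith
      have : (F fun j => a (j + 1)) = F fun j => b (j + 1) :=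
        phi_injOn (F_nonneg _) (F_nonneg _) hphi
      exact ih _ _ this
  intro a b h
  funext k
  exact key k a b h

/-- The orbit of `x` under `y ↦ fract y / (1 - fract y)`. -/
def seq (x : ℝ) : ℕ → ℝ
  | 0 => x
  | k + 1 => Int.fract (seq x k) / (1 - Int.fract (seq x k))

lemma seq_nonneg {x : ℝ} (hx : 0 ≤ x) : ∀ k, 0 ≤ seq x k
  | 0 => hx
  | k + 1 => by
    have h1 := Int.fract_nonneg (seq x k)
    have h2 := Int.fract_lt_one (seq x k)
    simp only [seq]
    apply div_nonneg h1
    linarith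

lemma seq_rec {x : ℝ} (hx : 0 ≤ x) (k : ℕ) :
    seq x k = (⌊seq x k⌋₊ : ℝ) + phi (seq x (k + 1)) := by
  set y := seq x k with hy
  have hy0 : 0 ≤ y := seq_nonneg hx k
  have h1 := Int.fract_nonneg y
  have h2 := Int.fract_lt_one y
  set r := Int.fract y with hr
  have hphi : phi (seq x (k + 1)) = r := by
    have hnn : 0 ≤ r / (1 - r) := div_nonneg h1 (by linarith)
    show phi (r / (1 - r)) = r
    rw [phi_eq hnn]
    have h1r : (1:ℝ) - r ≠ 0 := by linarith
    field_simp
    ring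
  rw [hphi]
  have hfloor : (⌊y⌋₊ : ℝ) = (⌊y⌋ : ℝ) := natCast_floor_eq_intCast_floor hy0
  rw [hfloor]
  linarith [Int.floor_add_fract y]

lemma fold_of_rec : ∀ (n : ℕ) (y : ℕ → ℝ) (c : ℕ → ℕ),
    (∀ k, y k = (c k : ℝ) + phi (y (k + 1))) → y 0 = fold n c (y (n + 1))
  | 0, y, c, h => by simp only [fold]; exact h 0
  | n + 1, y, c, h => by
    have ih := fold_of_rec n (fun k => y (k + 1)) (fun k => c (k + 1))
      (fun k => h (k + 1))
    simp only [fold]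
    rw [← ih]
    exact h 0

lemma F_surjOn {x : ℝ} (hx : 0 ≤ x) : ∃ a : ℕ → ℕ, F a = x := by
  set a : ℕ → ℕ := fun k => ⌊seq x k⌋₊ with ha
  refine ⟨a, ?_⟩
  have hrec : ∀ k, seq x k = (a k : ℝ) + phi (seq x (k + 1)) := fun k => seq_rec hx k
  have hfold : ∀ n, x = fold n a (seq x (n + 1)) := by
    intro n
    have := fold_of_rec n (seq x) a hrec
    exact this
  have hdist : ∀ n : ℕ, dist (val n a) x ≤ 1 / (n + 1) := by
    intro n
    have h1 : val n a ≤ x := by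
      rw [hfold n]
      exact fold_mono n a le_rfl (seq_nonneg hx (n + 1))
    have h2 : x - val n a ≤ 1 / (n + 1) := by
      rw [hfold n]
      exact fold_diff n a le_rfl (seq_nonneg hx (n + 1))
    rw [Real.dist_eq, abs_of_nonpos (by linarith)]
    linarith
  have htend : Tendsto (fun n => val n a) atTop (𝓝 x) := by
    rw [tendsto_iff_dist_tendsto_zero]
    apply squeeze_zero (fun n => dist_nonneg) hdist
    exact tendsto_one_div_add_atTop_nhds_zero_nat
  exact tendsto_nhds_unique (tendsto_val a) htend

end BaireCF

end BaireCF

/-- There is a continuous bijection from Baire space `ℕ → ℕ` (with the product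
topology, `ℕ` discrete) onto the nonnegative reals. -/
theorem continuous_bijection_Baire_to_nonneg_reals :
    ∃ F : (ℕ → ℕ) → ℝ, Continuous F ∧ Function.Injective F ∧
      Set.range F = {x : ℝ | 0 ≤ x} := by
  refine ⟨BaireCF.F, BaireCF.F_continuous, BaireCF.F_injective, ?_⟩
  ext x
  simp only [Set.mem_range, Set.mem_setOf_eq]
  constructor
  · rintro ⟨a, rfl⟩
    exact BaireCF.F_nonneg a
  · intro hx
    exact BaireCF.F_surjOn hx
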